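/- For every n ≥ 1 and every δ ∈ [0,1/3], the local part of the system P_b^{n,δ} of n maximally biased δ-PRBs equals (3δ)ⁿ. -/

import Mathlib

open Finset

/-- n-bit strings. -/
abbrev Bits (n : ℕ) := Fin n → Bool

/-- A bipartite conditional "box" on n-bit alphabets: `P x y u v` is the
probability of outputs `(x, y)` given inputs `(u, v)`. -/
abbrev Box (n : ℕ) := Bits n → Bits n → Bits n → Bits n → ℝ

/-- `P` is a bipartite conditional probability distribution. -/
def IsBox {n : ℕ} (P : Box n) : Prop :=
  (∀ x y u v, 0 ≤ P x y u v) ∧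
  (∀ u v, ∑ x : Bits n, ∑ y : Bits n, P x y u v = 1)

/-- `P` is non-signalling. -/
def NonSignalling {n : ℕ} (P : Box n) : Prop :=
  (∀ y v u u', ∑ x : Bits n, P x y u v = ∑ x : Bits n, P x y u' v) ∧
  (∀ x u v v', ∑ y : Bits n, P x y u v = ∑ y : Bits n, P x y u v')

/-- The local deterministic box given by response functions `f` (Alice) and `g` (Bob). -/
def detBox {n : ℕ} (f g : Bits n → Bits n) : Box n :=
  fun x y u v => if x = f u ∧ y = g v then 1 else 0

/-- `P` is local deterministic. -/
def IsLocalDet {n : ℕ} (P : Box n) : Prop :=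
  ∃ f g : Bits n → Bits n, P = detBox f g

/-- `P` is local: a convex combination of local deterministic boxes. -/
def IsLocal {n : ℕ} (P : Box n) : Prop :=
  ∃ w : (Bits n → Bits n) × (Bits n → Bits n) → ℝ,
    (∀ fg, 0 ≤ w fg) ∧ (∑ fg, w fg = 1) ∧
    (∀ x y u v, P x y u v =
      ∑ fg : (Bits n → Bits n) × (Bits n → Bits n), w fg * detBox fg.1 fg.2 x y u v)

/-- The local part of `P`: the maximal weight `p` such that `P` is a convex
combination of a local box (weight `p`) and a non-signalling box (weight `1 - p`). -/
noncomputable def localPart {n : ℕ} (P : Box n) : ℝ :=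
  sSup {p : ℝ | 0 ≤ p ∧ p ≤ 1 ∧
    ∃ PL PNS : Box n, IsBox PL ∧ IsLocal PL ∧ IsBox PNS ∧ NonSignalling PNS ∧
      ∀ x y u v, P x y u v = p * PL x y u v + (1 - p) * PNS x y u v}

/-- Single-copy isotropic ε-PRB entries. -/
noncomputable def isoPRB1 (ε : ℝ) (x y u v : Bool) : ℝ :=
  if xor x y = (u && v) then (1 - ε) / 2 else ε / 2

/-- The system of n independent isotropic ε-PRBs. -/
noncomputable def isoPRB (n : ℕ) (ε : ℝ) : Box n :=
  fun x y u v => ∏ i : Fin n, isoPRB1 ε (x i) (y i) (u i) (v i)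

/-- Single-copy maximally biased δ-PRB entries. -/
noncomputable def biasedPRB1 (δ : ℝ) (x y u v : Bool) : ℝ :=
  if u && v then
    match x, y with
    | false, false => 0
    | true,  false => 1 / 2 - δ / 2
    | false, true  => 1 / 2 + δ / 2
    | true,  true  => 0
  else
    match x, y with
    | false, false => 1 / 2 - δ / 2
    | true,  false => 0
    | false, true  => δ
    | true,  true  => 1 / 2 - δ / 2

/-- The system of n independent maximally biased δ-PRBs. -/
noncomputable def biasedPRB (n : ℕ) (δ : ℝ) : Box n :=
  fun x y u v => ∏ i : Fin n, biasedPRB1 δ (x i) (y i) (u i) (v i)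


section AuxStmt17

-- single bit lemmas
def fA (k : Fin 3) (b : Bool) : Bool := if k = 0 then b else if k = 1 then false else !b
def gA (k : Fin 3) (b : Bool) : Bool := if k = 0 then !b else if k = 1 then b else true

noncomputable def L1 (x y u v : Bool) : ℝ :=
  ∑ k : Fin 3, (1/3 : ℝ) * (if x = fA k u ∧ y = gA k v then 1 else 0)

lemma L1_nonneg (x y u v : Bool) : 0 ≤ L1 x y u v := by
  apply Finset.sum_nonneg; intro k _; positivity

lemma L1_margB (y u v : Bool) : ∑ x : Bool, L1 x y u v = if y then 2/3 else 1/3 := by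
  cases y <;> cases u <;> cases v <;>
    simp [L1, Fin.sum_univ_three, fA, gA, Fintype.sum_bool] <;> norm_num

lemma L1_margA (x u v : Bool) : ∑ y : Bool, L1 x y u v = if x then 1/3 else 2/3 := by
  cases x <;> cases u <;> cases v <;>
    simp [L1, Fin.sum_univ_three, fA, gA, Fintype.sum_bool] <;> norm_num

lemma P1_nonneg {δ : ℝ} (hδ0 : 0 ≤ δ) (hδ : δ ≤ 1/3) (x y u v : Bool) :
    0 ≤ biasedPRB1 δ x y u v := by
  cases x <;> cases y <;> cases u <;> cases v <;>
    simp [biasedPRB1] <;> linarith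

lemma P1_margB (δ : ℝ) (y u v : Bool) :
    ∑ x : Bool, biasedPRB1 δ x y u v = if y then 1/2 + δ/2 else 1/2 - δ/2 := by
  cases y <;> cases u <;> cases v <;>
    simp [biasedPRB1, Fintype.sum_bool] <;> ring

lemma P1_margA (δ : ℝ) (x u v : Bool) :
    ∑ y : Bool, biasedPRB1 δ x y u v = if x then 1/2 - δ/2 else 1/2 + δ/2 := by
  cases x <;> cases u <;> cases v <;>
    simp [biasedPRB1, Fintype.sum_bool] <;> ring

lemma P1_decomp (δ : ℝ) (x y u v : Bool) :
    biasedPRB1 δ x y u v = 3*δ * L1 x y u v + (1 - 3*δ) * biasedPRB1 0 x y u v := by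
  cases x <;> cases y <;> cases u <;> cases v <;>
    simp [biasedPRB1, L1, Fin.sum_univ_three, fA, gA] <;> ring

lemma I1_sum (δ : ℝ) :
    ∑ a : Bool, ∑ b : Bool, (if ¬(a = true ∧ b = true) then (1:ℝ) else 0) *
      biasedPRB1 δ false true a b = 3*δ := by
  simp [biasedPRB1, Fintype.sum_bool]; ring
variable {n : ℕ}

/-- product box from a single-bit kernel -/
noncomputable def prodBox (n : ℕ) (F : Bool → Bool → Bool → Bool → ℝ) : Box n :=
  fun x y u v => ∏ i : Fin n, F (x i) (y i) (u i) (v i)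

lemma sum_bits_prod (F : Fin n → Bool → ℝ) :
    ∑ x : Bits n, ∏ i, F i (x i) = ∏ i, ∑ b : Bool, F i b :=
  (Fintype.prod_sum F).symm

lemma prodBox_nonneg {F} (h : ∀ x y u v, 0 ≤ F x y u v) (x y u v : Bits n) :
    0 ≤ prodBox n F x y u v :=
  Finset.prod_nonneg fun i _ => h _ _ _ _

lemma prodBox_sum {F} (h : ∀ u v, ∑ x : Bool, ∑ y : Bool, F x y u v = 1) (u v : Bits n) :
    ∑ x : Bits n, ∑ y : Bits n, prodBox n F x y u v = 1 := by
  have h1 : ∀ x : Bits n, ∑ y : Bits n, prodBox n F x y u v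
      = ∏ i, ∑ b : Bool, F (x i) b (u i) (v i) :=
    fun x => sum_bits_prod fun i b => F (x i) b (u i) (v i)
  have h2 : ∑ x : Bits n, ∏ i, ∑ b : Bool, F (x i) b (u i) (v i)
      = ∏ i, ∑ a : Bool, ∑ b : Bool, F a b (u i) (v i) :=
    sum_bits_prod fun i a => ∑ b : Bool, F a b (u i) (v i)
  rw [Finset.sum_congr rfl fun x _ => h1 x, h2]
  exact (Finset.prod_congr rfl fun i _ => h (u i) (v i)).trans Finset.prod_const_one

lemma prodBox_margB {F} (m : Bool → Bool → ℝ)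
    (h : ∀ y u v, ∑ x : Bool, F x y u v = m y v) (y u v : Bits n) :
    ∑ x : Bits n, prodBox n F x y u v = ∏ i, m (y i) (v i) :=
  (sum_bits_prod fun i b => F b (y i) (u i) (v i)).trans
    (Finset.prod_congr rfl fun i _ => h _ _ _)

lemma prodBox_margA {F} (m : Bool → Bool → ℝ)
    (h : ∀ x u v, ∑ y : Bool, F x y u v = m x u) (x u v : Bits n) :
    ∑ y : Bits n, prodBox n F x y u v = ∏ i, m (x i) (u i) :=
  (sum_bits_prod fun i b => F (x i) b (u i) (v i)).trans
    (Finset.prod_congr rfl fun i _ => h _ _ _)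
/-- product strategy from single-bit strategies -/
def prodF (σ : Fin n → Fin 3) : Bits n → Bits n := fun u i => fA (σ i) (u i)
def prodG (σ : Fin n → Fin 3) : Bits n → Bits n := fun v i => gA (σ i) (v i)

lemma detBox_prod (σ : Fin n → Fin 3) (x y u v : Bits n) :
    detBox (prodF σ) (prodG σ) x y u v
      = ∏ i, (if x i = fA (σ i) (u i) ∧ y i = gA (σ i) (v i) then (1:ℝ) else 0) := by
  rw [Finset.prod_boole]
  unfold detBox
  congr 1
  simp only [eq_iff_iff]
  constructor
  · rintro ⟨hx, hy⟩ i _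
    exact ⟨congrFun hx i, congrFun hy i⟩
  · intro h
    exact ⟨funext fun i => (h i (Finset.mem_univ i)).1,
           funext fun i => (h i (Finset.mem_univ i)).2⟩

noncomputable def wgt (n : ℕ) : (Bits n → Bits n) × (Bits n → Bits n) → ℝ :=
  fun FG => ∑ σ : Fin n → Fin 3, if FG = (prodF σ, prodG σ) then (1/3:ℝ)^n else 0

lemma isLocal_prodL1 : IsLocal (prodBox n L1) := by
  refine ⟨wgt n, fun fg => Finset.sum_nonneg fun σ _ => by positivity, ?_, ?_⟩
  · unfold wgt
    rw [Finset.sum_comm]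
    have : ∀ σ : Fin n → Fin 3,
        (∑ FG : (Bits n → Bits n) × (Bits n → Bits n),
          if FG = (prodF σ, prodG σ) then (1/3:ℝ)^n else 0) = (1/3:ℝ)^n := by
      intro σ; simp
    rw [Finset.sum_congr rfl fun σ _ => this σ, Finset.sum_const, Finset.card_univ]
    simp only [nsmul_eq_mul]
    rw [Fintype.card_fun]
    push_cast
    rw [Fintype.card_fin, Fintype.card_fin, ← mul_pow]
    norm_num
  · intro x y u v
    have swap : (∑ FG : (Bits n → Bits n) × (Bits n → Bits n),
          wgt n FG * detBox FG.1 FG.2 x y u v)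
        = ∑ σ : Fin n → Fin 3, (1/3:ℝ)^n * detBox (prodF σ) (prodG σ) x y u v := by
      unfold wgt
      simp only [Finset.sum_mul, ite_mul, zero_mul]
      rw [Finset.sum_comm]
      apply Finset.sum_congr rfl
      intro σ _
      simp
    rw [swap]
    have : ∀ σ : Fin n → Fin 3, (1/3:ℝ)^n * detBox (prodF σ) (prodG σ) x y u v
        = ∏ i, (1/3:ℝ) * (if x i = fA (σ i) (u i) ∧ y i = gA (σ i) (v i) then (1:ℝ) else 0) := by
      intro σ
      rw [detBox_prod, Finset.prod_mul_distrib, Finset.prod_const, Finset.card_univ,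
        Fintype.card_fin]
    rw [Finset.sum_congr rfl fun σ _ => this σ]
    have := (Fintype.prod_sum (fun (i : Fin n) (k : Fin 3) =>
      (1/3:ℝ) * (if x i = fA k (u i) ∧ y i = gA k (v i) then (1:ℝ) else 0))).symm
    exact this.symm
lemma bool_eq_of_ne_of_ne {x y z : Bool} (h1 : x ≠ z) (h2 : y ≠ z) : x = y := by
  revert h1 h2; revert x y z; decide

lemma key_strategy {n : ℕ} (f g : Bits n → Bits n)
    (C1 : ∀ u v (i : Fin n), u i = true → v i = true → f u i ≠ g v i)
    (C2 : ∀ u v (i : Fin n), ¬(u i = true ∧ v i = true) → f u i = true → g v i = true) :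
    ∃ u v : Bits n, (∀ i, ¬(u i = true ∧ v i = true)) ∧
      f u = (fun _ => false) ∧ g v = (fun _ => true) := by
  classical
  set one : Bits n := fun _ => true with hone
  set a : Bits n := f one with ha
  have fconst : ∀ (u : Bits n) (i : Fin n), u i = true → f u i = a i := by
    intro u i hu
    exact bool_eq_of_ne_of_ne (C1 u one i hu rfl) (C1 one one i rfl rfl)
  have gone : ∀ (v : Bits n) (i : Fin n), v i = true → g v i = !(a i) := by
    intro v i hv
    have h := C1 one v i rfl hv
    cases hgv : g v i <;> cases hai : a i <;> simp_all
  refine ⟨fun i => if a i = false ∧ ∀ w : Bits n, g w i = true then true else false,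
          fun i => if a i = false ∧ ¬ (∀ w : Bits n, g w i = true) then true else false,
          ?_, ?_, ?_⟩
  · intro i
    by_cases h1 : a i = false ∧ ∀ w : Bits n, g w i = true <;>
      by_cases h2 : a i = false ∧ ¬ (∀ w : Bits n, g w i = true) <;> simp_all
  · funext i
    set u0 : Bits n := fun i => if a i = false ∧ ∀ w : Bits n, g w i = true then true else false
      with hu0
    by_cases h1 : a i = false ∧ ∀ w : Bits n, g w i = true
    · have hu : u0 i = true := by rw [hu0]; simp only [if_pos h1]
      rw [fconst u0 i hu]; exact h1.1
    · have hu : u0 i = false := by rw [hu0]; simp only [if_neg h1]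
      cases hai : a i
      · have hex : ¬ ∀ w : Bits n, g w i = true := fun hall => h1 ⟨hai, hall⟩
        push_neg at hex
        obtain ⟨w0, hw0⟩ := hex
        by_contra hf
        have hft : f u0 i = true := by cases hfu : f u0 i; exact absurd hfu hf; rfl
        exact hw0 (C2 u0 w0 i (by rw [hu]; simp) hft)
      · have hg1 : g one i = false := by rw [gone one i rfl, hai]; rfl
        by_contra hf
        have hft : f u0 i = true := by cases hfu : f u0 i; exact absurd hfu hf; rfl
        have := C2 u0 one i (by rw [hu]; simp) hft
        rw [hg1] at this; exact Bool.noConfusion this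
  · funext i
    set v0 : Bits n := fun i => if a i = false ∧ ¬ (∀ w : Bits n, g w i = true) then true
      else false with hv0
    by_cases h2 : a i = false ∧ ¬ (∀ w : Bits n, g w i = true)
    · have hv : v0 i = true := by rw [hv0]; simp only [if_pos h2]
      rw [gone v0 i hv, h2.1]; rfl
    · have hv : v0 i = false := by rw [hv0]; simp only [if_neg h2]
      cases hai : a i
      · have hall : ∀ w : Bits n, g w i = true := by
          by_contra hno; exact h2 ⟨hai, hno⟩
        exact hall v0
      · have hf1 : f one i = true := fconst one i rfl |>.trans hai
        exact C2 one v0 i (by rw [hv]; simp) hf1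
noncomputable def IFun (n : ℕ) (Q : Box n) : ℝ :=
  ∑ u : Bits n, ∑ v : Bits n,
    (if ∀ i, ¬(u i = true ∧ v i = true) then (1:ℝ) else 0) *
      Q (fun _ => false) (fun _ => true) u v

lemma IFun_nonneg {n : ℕ} {Q : Box n} (h : ∀ x y u v, 0 ≤ Q x y u v) : 0 ≤ IFun n Q := by
  apply Finset.sum_nonneg; intro u _
  apply Finset.sum_nonneg; intro v _
  have := h (fun _ => false) (fun _ => true) u v
  positivity

lemma IFun_biased (n : ℕ) (δ : ℝ) : IFun n (biasedPRB n δ) = (3*δ)^n := by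
  unfold IFun
  have h1 : ∀ u v : Bits n,
      (if ∀ i, ¬(u i = true ∧ v i = true) then (1:ℝ) else 0) *
        biasedPRB n δ (fun _ => false) (fun _ => true) u v
      = ∏ i, ((if ¬(u i = true ∧ v i = true) then (1:ℝ) else 0) *
          biasedPRB1 δ false true (u i) (v i)) := by
    intro u v
    rw [Finset.prod_mul_distrib]
    congr 1
    rw [Finset.prod_boole]
    simp
  rw [Finset.sum_congr rfl fun u _ => Finset.sum_congr rfl fun v _ => h1 u v]
  have h2 : ∀ u : Bits n, (∑ v : Bits n, ∏ i, ((if ¬(u i = true ∧ v i = true) then (1:ℝ) else 0) *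
        biasedPRB1 δ false true (u i) (v i)))
      = ∏ i, ∑ b : Bool, ((if ¬(u i = true ∧ b = true) then (1:ℝ) else 0) *
        biasedPRB1 δ false true (u i) b) :=
    fun u => sum_bits_prod fun i b => (if ¬(u i = true ∧ b = true) then (1:ℝ) else 0) *
        biasedPRB1 δ false true (u i) b
  rw [Finset.sum_congr rfl fun u _ => h2 u]
  have h3 : (∑ u : Bits n, ∏ i, ∑ b : Bool, ((if ¬(u i = true ∧ b = true) then (1:ℝ) else 0) *
        biasedPRB1 δ false true (u i) b))
      = ∏ i, ∑ a : Bool, ∑ b : Bool, ((if ¬(a = true ∧ b = true) then (1:ℝ) else 0) *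
        biasedPRB1 δ false true a b) :=
    sum_bits_prod fun i a => ∑ b : Bool, (if ¬(a = true ∧ b = true) then (1:ℝ) else 0) *
        biasedPRB1 δ false true a b
  rw [h3, Finset.prod_congr rfl fun i _ => I1_sum δ, Finset.prod_const, Finset.card_univ,
    Fintype.card_fin]

lemma IFun_det_ge {n : ℕ} (f g : Bits n → Bits n)
    (u0 v0 : Bits n) (hd : ∀ i, ¬(u0 i = true ∧ v0 i = true))
    (hf : f u0 = fun _ => false) (hg : g v0 = fun _ => true) :
    1 ≤ IFun n (detBox f g) := by
  have hnn : ∀ u v : Bits n, 0 ≤ (if ∀ i, ¬(u i = true ∧ v i = true) then (1:ℝ) else 0) *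
      detBox f g (fun _ => false) (fun _ => true) u v := by
    intro u v
    apply mul_nonneg
    · split <;> norm_num
    · unfold detBox; split <;> norm_num
  have hterm : (if ∀ i, ¬(u0 i = true ∧ v0 i = true) then (1:ℝ) else 0) *
      detBox f g (fun _ => false) (fun _ => true) u0 v0 = 1 := by
    rw [if_pos hd]
    unfold detBox
    rw [if_pos ⟨hf.symm, hg.symm⟩]
    norm_num
  unfold IFun
  calc (1:ℝ) = (if ∀ i, ¬(u0 i = true ∧ v0 i = true) then (1:ℝ) else 0) *
      detBox f g (fun _ => false) (fun _ => true) u0 v0 := hterm.symm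
    _ ≤ ∑ v : Bits n, (if ∀ i, ¬(u0 i = true ∧ v i = true) then (1:ℝ) else 0) *
        detBox f g (fun _ => false) (fun _ => true) u0 v :=
      Finset.single_le_sum (fun v _ => hnn u0 v) (Finset.mem_univ v0)
    _ ≤ _ :=
      Finset.single_le_sum (fun u _ => Finset.sum_nonneg fun v _ => hnn u v) (Finset.mem_univ u0)
lemma L1_sum2 (u v : Bool) : ∑ x : Bool, ∑ y : Bool, L1 x y u v = 1 := by
  simp only [L1_margA]
  simp [Fintype.sum_bool]
  norm_num

lemma P1_sum2 (δ : ℝ) (u v : Bool) : ∑ x : Bool, ∑ y : Bool, biasedPRB1 δ x y u v = 1 := by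
  simp only [P1_margA]
  simp [Fintype.sum_bool]
  ring

lemma prodBox_NS {n : ℕ} {F} (mB mA : Bool → Bool → ℝ)
    (hB : ∀ y u v, ∑ x : Bool, F x y u v = mB y v)
    (hA : ∀ x u v, ∑ y : Bool, F x y u v = mA x u) : NonSignalling (prodBox n F) :=
  ⟨fun y v u u' => (prodBox_margB mB hB y u v).trans (prodBox_margB mB hB y u' v).symm,
   fun x u v v' => (prodBox_margA mA hA x u v).trans (prodBox_margA mA hA x u v').symm⟩

lemma member (n : ℕ) (hn : 1 ≤ n) (δ : ℝ) (hδ0 : 0 ≤ δ) (hδ : δ ≤ 1/3) :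
    (3*δ)^n ∈ {p : ℝ | 0 ≤ p ∧ p ≤ 1 ∧
      ∃ PL PNS : Box n, IsBox PL ∧ IsLocal PL ∧ IsBox PNS ∧ NonSignalling PNS ∧
        ∀ x y u v, biasedPRB n δ x y u v = p * PL x y u v + (1 - p) * PNS x y u v} := by
  have h30 : 0 ≤ 3*δ := by linarith
  have h31 : 3*δ ≤ 1 := by linarith
  have hc0 : 0 ≤ (3*δ)^n := pow_nonneg h30 n
  have hc1 : (3*δ)^n ≤ 1 := pow_le_one₀ h30 h31
  have hN0 : ∀ x y u v : Bool, 0 ≤ biasedPRB1 0 x y u v :=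
    P1_nonneg (le_refl 0) (by norm_num)
  rcases eq_or_lt_of_le h31 with h3 | h3
  · -- 3δ = 1
    have hone : (3*δ)^n = 1 := by rw [h3, one_pow]
    refine ⟨hc0, hc1, prodBox n L1, prodBox n (biasedPRB1 0),
      ⟨prodBox_nonneg L1_nonneg, prodBox_sum L1_sum2⟩, isLocal_prodL1,
      ⟨prodBox_nonneg hN0, prodBox_sum (P1_sum2 0)⟩,
      prodBox_NS _ _ (P1_margB 0) (P1_margA 0), ?_⟩
    intro x y u v
    rw [hone]
    have hPL1 : ∀ a b c d : Bool, biasedPRB1 δ a b c d = L1 a b c d := by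
      intro a b c d
      have h := P1_decomp δ a b c d
      rw [h3] at h
      simpa using h
    have : biasedPRB n δ x y u v = prodBox n L1 x y u v :=
      Finset.prod_congr rfl fun i _ => hPL1 _ _ _ _
    rw [this]; ring
  · -- 3δ < 1
    have hclt : (3*δ)^n < 1 := pow_lt_one₀ h30 h3 (by omega)
    have hcne : (1 : ℝ) - (3*δ)^n ≠ 0 := by linarith
    have hcpos : (0:ℝ) < 1 - (3*δ)^n := by linarith
    set c : ℝ := (3*δ)^n with hc
    have hdom : ∀ x y u v : Bits n, c * prodBox n L1 x y u v ≤ biasedPRB n δ x y u v := by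
      intro x y u v
      have hrw : c * prodBox n L1 x y u v = ∏ i, (3*δ * L1 (x i) (y i) (u i) (v i)) := by
        rw [Finset.prod_mul_distrib, Finset.prod_const, Finset.card_univ, Fintype.card_fin]
        rfl
      rw [hrw]
      apply Finset.prod_le_prod
      · intro i _
        have := L1_nonneg (x i) (y i) (u i) (v i)
        positivity
      · intro i _
        rw [P1_decomp δ (x i) (y i) (u i) (v i)]
        have h0 := hN0 (x i) (y i) (u i) (v i)
        nlinarith
    have hPsum : ∀ u v : Bits n, ∑ x : Bits n, ∑ y : Bits n, biasedPRB n δ x y u v = 1 :=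
      fun u v => prodBox_sum (P1_sum2 δ) u v
    have hLsum : ∀ u v : Bits n, ∑ x : Bits n, ∑ y : Bits n, prodBox n L1 x y u v = 1 :=
      fun u v => prodBox_sum L1_sum2 u v
    have hPmB : ∀ (y u v : Bits n), ∑ x : Bits n, biasedPRB n δ x y u v
        = ∏ i, (if y i then 1/2 + δ/2 else 1/2 - δ/2) :=
      fun y u v => prodBox_margB _ (P1_margB δ) y u v
    have hPmA : ∀ (x u v : Bits n), ∑ y : Bits n, biasedPRB n δ x y u v
        = ∏ i, (if x i then 1/2 - δ/2 else 1/2 + δ/2) :=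
      fun x u v => prodBox_margA _ (P1_margA δ) x u v
    have hLmB : ∀ (y u v : Bits n), ∑ x : Bits n, prodBox n L1 x y u v
        = ∏ i, (if y i then 2/3 else 1/3) :=
      fun y u v => prodBox_margB _ L1_margB y u v
    have hLmA : ∀ (x u v : Bits n), ∑ y : Bits n, prodBox n L1 x y u v
        = ∏ i, (if x i then 1/3 else 2/3) :=
      fun x u v => prodBox_margA _ L1_margA x u v
    refine ⟨hc0, hc1, prodBox n L1,
      (fun x y u v => (1 - c)⁻¹ * (biasedPRB n δ x y u v - c * prodBox n L1 x y u v)),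
      ⟨prodBox_nonneg L1_nonneg, prodBox_sum L1_sum2⟩, isLocal_prodL1, ⟨?_, ?_⟩, ⟨?_, ?_⟩, ?_⟩
    · intro x y u v
      exact mul_nonneg (inv_nonneg.2 hcpos.le) (sub_nonneg.2 (hdom x y u v))
    · intro u v
      simp only [← Finset.mul_sum, Finset.sum_sub_distrib]
      rw [hPsum u v, hLsum u v]
      field_simp
    · intro y v u u'
      simp only [← Finset.mul_sum, Finset.sum_sub_distrib]
      rw [hPmB y u v, hPmB y u' v, hLmB y u v, hLmB y u' v]
    · intro x u v v'
      simp only [← Finset.mul_sum, Finset.sum_sub_distrib]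
      rw [hPmA x u v, hPmA x u v', hLmA x u v, hLmA x u v']
    · intro x y u v
      field_simp
      ring
lemma upper (n : ℕ) (δ : ℝ) (hδ0 : 0 ≤ δ) (p : ℝ)
    (hp : p ∈ {p : ℝ | 0 ≤ p ∧ p ≤ 1 ∧
      ∃ PL PNS : Box n, IsBox PL ∧ IsLocal PL ∧ IsBox PNS ∧ NonSignalling PNS ∧
        ∀ x y u v, biasedPRB n δ x y u v = p * PL x y u v + (1 - p) * PNS x y u v}) :
    p ≤ (3*δ)^n := by
  obtain ⟨hp0, hp1, PL, PNS, hPLbox, ⟨w, hw0, hw1, hwrep⟩, hNSbox, hNS, heq⟩ := hp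
  rcases eq_or_lt_of_le hp0 with h0 | hppos
  · rw [← h0]; positivity
  have hdetnn : ∀ (f g : Bits n → Bits n) (x y u v : Bits n), 0 ≤ detBox f g x y u v := by
    intro f g x y u v; unfold detBox; split <;> norm_num
  have hterm : ∀ fg : (Bits n → Bits n) × (Bits n → Bits n),
      w fg ≤ w fg * IFun n (detBox fg.1 fg.2) := by
    intro fg
    rcases eq_or_lt_of_le (hw0 fg) with hz | hpos
    · rw [← hz]; simp
    · -- support condition
      have hdom : ∀ u v : Bits n, biasedPRB n δ (fg.1 u) (fg.2 v) u v ≠ 0 := by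
        intro u v
        have hPL : w fg * detBox fg.1 fg.2 (fg.1 u) (fg.2 v) u v
            ≤ PL (fg.1 u) (fg.2 v) u v := by
          rw [hwrep]
          exact Finset.single_le_sum
            (fun fg' _ => mul_nonneg (hw0 fg') (hdetnn _ _ _ _ _ _)) (Finset.mem_univ fg)
        have hdet : detBox fg.1 fg.2 (fg.1 u) (fg.2 v) u v = 1 := by
          unfold detBox; rw [if_pos ⟨rfl, rfl⟩]
        rw [hdet, mul_one] at hPL
        have hPNS : 0 ≤ (1-p) * PNS (fg.1 u) (fg.2 v) u v :=
          mul_nonneg (by linarith) (hNSbox.1 _ _ u v)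
        have h1 : p * w fg ≤ biasedPRB n δ (fg.1 u) (fg.2 v) u v := by
          rw [heq]
          have := mul_le_mul_of_nonneg_left hPL hppos.le
          linarith
        have h2 : 0 < p * w fg := mul_pos hppos hpos
        exact ne_of_gt (lt_of_lt_of_le h2 h1)
      have hfac : ∀ (u v : Bits n) (i : Fin n),
          biasedPRB1 δ (fg.1 u i) (fg.2 v i) (u i) (v i) ≠ 0 := by
        intro u v i hzero
        exact hdom u v (Finset.prod_eq_zero (Finset.mem_univ i) hzero)
      have C1 : ∀ u v (i : Fin n), u i = true → v i = true → fg.1 u i ≠ fg.2 v i := by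
        intro u v i hu hv hfgv
        apply hfac u v i
        rw [hu, hv, hfgv]
        cases fg.2 v i <;> simp [biasedPRB1]
      have C2 : ∀ u v (i : Fin n), ¬(u i = true ∧ v i = true) →
          fg.1 u i = true → fg.2 v i = true := by
        intro u v i hnb hft
        by_contra hgf
        have hgf' : fg.2 v i = false := by
          cases h : fg.2 v i
          · rfl
          · exact absurd h hgf
        apply hfac u v i
        rw [hft, hgf']
        cases hu : u i <;> cases hv : v i
        · simp [biasedPRB1]
        · simp [biasedPRB1]
        · simp [biasedPRB1]
        · exact absurd ⟨hu, hv⟩ hnb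
      obtain ⟨u0, v0, hd, hf, hg⟩ := key_strategy fg.1 fg.2 C1 C2
      calc w fg = w fg * 1 := (mul_one _).symm
        _ ≤ w fg * IFun n (detBox fg.1 fg.2) :=
          mul_le_mul_of_nonneg_left (IFun_det_ge fg.1 fg.2 u0 v0 hd hf hg) (hw0 fg)
  have hswap : IFun n PL = ∑ fg : (Bits n → Bits n) × (Bits n → Bits n),
      w fg * IFun n (detBox fg.1 fg.2) := by
    unfold IFun
    simp only [hwrep, Finset.mul_sum]
    rw [Finset.sum_congr rfl fun u (_ : u ∈ Finset.univ) => Finset.sum_comm]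
    rw [Finset.sum_comm]
    apply Finset.sum_congr rfl
    intro fg _
    apply Finset.sum_congr rfl
    intro u _
    apply Finset.sum_congr rfl
    intro v _
    ring
  have hPLge : 1 ≤ IFun n PL := by
    rw [hswap, ← hw1]
    exact Finset.sum_le_sum fun fg _ => hterm fg
  have hlin : IFun n (biasedPRB n δ) = p * IFun n PL + (1-p) * IFun n PNS := by
    unfold IFun
    rw [Finset.mul_sum, Finset.mul_sum, ← Finset.sum_add_distrib]
    apply Finset.sum_congr rfl; intro u _
    rw [Finset.mul_sum, Finset.mul_sum, ← Finset.sum_add_distrib]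
    apply Finset.sum_congr rfl; intro v _
    rw [heq]; ring
  have hPNS0 : 0 ≤ IFun n PNS := IFun_nonneg hNSbox.1
  have hbval := IFun_biased n δ
  nlinarith [mul_le_mul_of_nonneg_left hPLge hppos.le,
    mul_nonneg (by linarith : (0:ℝ) ≤ 1 - p) hPNS0]
end AuxStmt17

/-- the local part of n maximally biased δ-PRBs is `(3δ)ⁿ`. -/
theorem stmt17 (n : ℕ) (hn : 1 ≤ n) (δ : ℝ) (hδ0 : 0 ≤ δ) (hδ : δ ≤ 1 / 3) :
    localPart (biasedPRB n δ) = (3 * δ) ^ n := by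
  have hmem := member n hn δ hδ0 hδ
  have hub := fun p hp => upper n δ hδ0 p hp
  exact le_antisymm (csSup_le ⟨_, hmem⟩ hub) (le_csSup ⟨_, fun x hx => hub x hx⟩ hmem)
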